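/- In the structure monoid M of a cycle set S, the element Π_k(t_1,...,t_k) = Ω_1(t_1)·Ω_2(t_1,t_2)·...·Ω_k(t_1,...,t_k) is invariant under any permutation of the entries (t_1,...,t_k). -/

import Mathlib

/-- Dehornoy's `Ω` expression: `Omega op k t` is `Ω_{k+1}(t 0, …, t k)`,
defined by `Ω_1(x) = x` and
`Ω_k(x_1,…,x_k) = Ω_{k-1}(x_1,…,x_{k-1}) * Ω_{k-1}(x_1,…,x_{k-2},x_k)`. -/
def Omega {S : Type*} (op : S → S → S) : (k : ℕ) → (Fin (k + 1) → S) → S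
  | 0, t => t 0
  | k + 1, t =>
      op (Omega op k fun i => t i.castSucc)
        (Omega op k fun i =>
          if i = Fin.last k then t (Fin.last (k + 1)) else t i.castSucc)

/-- Dehornoy's `Π` expression: `PiExpr op ι k t = ι(Ω_1(t_1)) ⋯ ι(Ω_k(t_1,…,t_k))`. -/
def PiExpr {S M : Type*} [Monoid M] (op : S → S → S) (ι : S → M) :
    (k : ℕ) → (Fin k → S) → M
  | 0, _ => 1
  | k + 1, t => PiExpr op ι k (fun i => t i.castSucc) * ι (Omega op k t)

/-- The defining relations of the structure monoid: `s (s*t) = t (t*s)`. -/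
def csRel {S : Type*} (op : S → S → S) (a b : FreeMonoid S) : Prop :=
  ∃ s t : S, a = FreeMonoid.of s * FreeMonoid.of (op s t) ∧
    b = FreeMonoid.of t * FreeMonoid.of (op t s)

/-- The structure monoid `⟨S ∣ s(s*t) = t(t*s)⟩⁺` of a cycle set. -/
abbrev StructureMonoid {S : Type*} (op : S → S → S) := (conGen (csRel op)).Quotient

/-- The canonical generators of the structure monoid. -/
def mkM {S : Type*} (op : S → S → S) (s : S) : StructureMonoid op :=
  (conGen (csRel op)).mk' (FreeMonoid.of s)

namespace PiAux

variable {S : Type*} (op : S → S → S)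

theorem omega_succ (k : ℕ) (t : Fin (k + 2) → S) :
    Omega op (k + 1) t =
      op (Omega op k fun i => t i.castSucc)
        (Omega op k fun i =>
          if i = Fin.last k then t (Fin.last (k + 1)) else t i.castSucc) := rfl

theorem pi_succ {M : Type*} [Monoid M] (ι : S → M) (k : ℕ) (t : Fin (k + 1) → S) :
    PiExpr op ι (k + 1) t = PiExpr op ι k (fun i => t i.castSucc) * ι (Omega op k t) := rfl

theorem omega_expand (l : ℕ) (u : Fin (l + 3) → S) :
    Omega op (l + 2) u =
      op
        (op (Omega op l fun i => if i = Fin.last l then u ((Fin.last l).castSucc.castSucc)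
              else u i.castSucc.castSucc)
            (Omega op l fun i => if i = Fin.last l then u ((Fin.last (l + 1)).castSucc)
              else u i.castSucc.castSucc))
        (op (Omega op l fun i => if i = Fin.last l then u ((Fin.last l).castSucc.castSucc)
              else u i.castSucc.castSucc)
            (Omega op l fun i => if i = Fin.last l then u (Fin.last (l + 2))
              else u i.castSucc.castSucc)) := by
  have h1 : (fun i : Fin (l + 1) => u i.castSucc.castSucc)
      = (fun i => if i = Fin.last l then u ((Fin.last l).castSucc.castSucc)
          else u i.castSucc.castSucc) := by
    funext i; by_cases h : i = Fin.last l <;> simp [h]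
  have h3 : (fun i : Fin (l + 1) =>
        if i.castSucc = Fin.last (l + 1) then u (Fin.last (l + 2)) else u i.castSucc.castSucc)
      = (fun i => if i = Fin.last l then u ((Fin.last l).castSucc.castSucc)
          else u i.castSucc.castSucc) := by
    funext i
    have hne : i.castSucc ≠ Fin.last (l + 1) := (Fin.castSucc_lt_last i).ne
    have hne2 : (Fin.last l).castSucc ≠ Fin.last (l + 1) := (Fin.castSucc_lt_last _).ne
    by_cases h : i = Fin.last l <;> simp [h, hne, hne2]
  have h4 : (fun i : Fin (l + 1) =>
        if i = Fin.last l then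
          (if (Fin.last (l + 1) : Fin (l + 2)) = Fin.last (l + 1) then u (Fin.last (l + 2))
            else u (Fin.last (l + 1)).castSucc)
        else (if i.castSucc = Fin.last (l + 1) then u (Fin.last (l + 2))
            else u i.castSucc.castSucc))
      = (fun i => if i = Fin.last l then u (Fin.last (l + 2)) else u i.castSucc.castSucc) := by
    funext i
    have hne : i.castSucc ≠ Fin.last (l + 1) := (Fin.castSucc_lt_last i).ne
    have hne2 : (Fin.last l).castSucc ≠ Fin.last (l + 1) := (Fin.castSucc_lt_last _).ne
    by_cases h : i = Fin.last l <;> simp [h, hne, hne2]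
  show op
      (op (Omega op l fun i => u i.castSucc.castSucc)
        (Omega op l fun i => if i = Fin.last l then u ((Fin.last (l + 1)).castSucc)
            else u i.castSucc.castSucc))
      (op (Omega op l fun i =>
            if i.castSucc = Fin.last (l + 1) then u (Fin.last (l + 2)) else u i.castSucc.castSucc)
        (Omega op l fun i =>
          if i = Fin.last l then
            (if (Fin.last (l + 1) : Fin (l + 2)) = Fin.last (l + 1) then u (Fin.last (l + 2))
              else u (Fin.last (l + 1)).castSucc)
          else (if i.castSucc = Fin.last (l + 1) then u (Fin.last (l + 2))
              else u i.castSucc.castSucc))) = _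
  rw [h1, h3, h4]


theorem omega_adj (hcs : ∀ s t u : S, op (op s t) (op s u) = op (op t s) (op t u)) :
    ∀ (n : ℕ) (t : Fin (n + 1) → S) (a b : Fin (n + 1)),
      (a : ℕ) + 1 = b → (b : ℕ) < n →
      Omega op n (t ∘ Equiv.swap a b) = Omega op n t := by
  intro n
  induction n with
  | zero => intro t a b _ hb; omega
  | succ m IH =>
    intro t a b hab hb
    rcases Nat.lt_or_ge (b : ℕ) m with hbm | hbm
    · -- the swapped positions are both among the first m positions: recurse
      set a' : Fin (m + 1) := ⟨a, by omega⟩ with ha'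
      set b' : Fin (m + 1) := ⟨b, by omega⟩ with hb'
      have haa : a = a'.castSucc := by apply Fin.ext; simp [ha']
      have hbb : b = b'.castSucc := by apply Fin.ext; simp [hb']
      have hswap : ∀ i : Fin (m + 1),
          Equiv.swap a b i.castSucc = (Equiv.swap a' b' i).castSucc := by
        intro i
        rw [haa, hbb]
        exact (Fin.castSucc_injective _).swap_apply a' b' i
      have halast : Equiv.swap a' b' (Fin.last m) = Fin.last m := by
        refine Equiv.swap_apply_of_ne_of_ne (Fin.ne_of_val_ne ?_) (Fin.ne_of_val_ne ?_) <;>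
          simp [ha', hb'] <;> omega
      have hlast : Equiv.swap a b (Fin.last (m + 1)) = Fin.last (m + 1) := by
        refine Equiv.swap_apply_of_ne_of_ne (Fin.ne_of_val_ne ?_) (Fin.ne_of_val_ne ?_) <;>
          simp <;> omega
      rw [omega_succ, omega_succ]
      have e1 : (fun i : Fin (m + 1) => (t ∘ Equiv.swap a b) i.castSucc)
          = (fun i => t i.castSucc) ∘ Equiv.swap a' b' := by
        funext i
        simp only [Function.comp_apply]
        rw [hswap]
      have e2 : (fun i : Fin (m + 1) =>
            if i = Fin.last m then (t ∘ Equiv.swap a b) (Fin.last (m + 1))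
            else (t ∘ Equiv.swap a b) i.castSucc)
          = (fun i => if i = Fin.last m then t (Fin.last (m + 1)) else t i.castSucc)
              ∘ Equiv.swap a' b' := by
        funext i
        simp only [Function.comp_apply]
        by_cases h : i = Fin.last m
        · rw [h, halast, if_pos rfl, if_pos rfl, hlast]
        · have hne : Equiv.swap a' b' i ≠ Fin.last m := fun hc =>
            h ((Equiv.swap a' b').injective (hc.trans halast.symm))
          rw [if_neg h, if_neg hne, hswap]
      rw [e1, e2]
      have c1 : (a' : ℕ) + 1 = b' := by simp [ha', hb']; omega
      have c2 : (b' : ℕ) < m := by simp [hb']; omega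
      exact congrArg₂ op (IH _ a' b' c1 c2) (IH _ a' b' c1 c2)
    · -- b = m : the top adjacent swap, use hcs
      have hbm' : (b : ℕ) = m := by omega
      rcases m with _ | l
      · omega
      · have ha : a = (Fin.last l).castSucc.castSucc := by apply Fin.ext; simp; omega
        have hbq : b = (Fin.last (l + 1)).castSucc := by apply Fin.ext; simp; omega
        rw [ha, hbq]
        have key : ∀ v w : Fin (l + 3) → S,
            (∀ i : Fin (l + 1), i ≠ Fin.last l →
              v i.castSucc.castSucc = w i.castSucc.castSucc) →
            v ((Fin.last l).castSucc.castSucc) = w ((Fin.last (l + 1)).castSucc) →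
            v ((Fin.last (l + 1)).castSucc) = w ((Fin.last l).castSucc.castSucc) →
            v (Fin.last (l + 2)) = w (Fin.last (l + 2)) →
            Omega op (l + 2) v = Omega op (l + 2) w := by
          intro v w helse h0 h1 h2
          rw [omega_expand, omega_expand]
          have hA : (fun i : Fin (l + 1) =>
                if i = Fin.last l then v ((Fin.last l).castSucc.castSucc)
                else v i.castSucc.castSucc)
              = (fun i => if i = Fin.last l then w ((Fin.last (l + 1)).castSucc)
                else w i.castSucc.castSucc) := by
            funext i
            by_cases h : i = Fin.last l
            · simp [h, h0]
            · simp [h, helse i h]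
          have hB : (fun i : Fin (l + 1) =>
                if i = Fin.last l then v ((Fin.last (l + 1)).castSucc)
                else v i.castSucc.castSucc)
              = (fun i => if i = Fin.last l then w ((Fin.last l).castSucc.castSucc)
                else w i.castSucc.castSucc) := by
            funext i
            by_cases h : i = Fin.last l
            · simp [h, h1]
            · simp [h, helse i h]
          have hC : (fun i : Fin (l + 1) =>
                if i = Fin.last l then v (Fin.last (l + 2))
                else v i.castSucc.castSucc)
              = (fun i => if i = Fin.last l then w (Fin.last (l + 2))
                else w i.castSucc.castSucc) := by
            funext i
            by_cases h : i = Fin.last l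
            · simp [h, h2]
            · simp [h, helse i h]
          rw [hA, hB, hC]
          exact (hcs _ _ _).symm
        apply key
        · intro i hi
          have hvne : (i : ℕ) ≠ l := fun hc => hi (Fin.ext (by simp [hc]))
          simp only [Function.comp_apply]
          rw [Equiv.swap_apply_of_ne_of_ne (Fin.ne_of_val_ne (by simp; omega))
            (Fin.ne_of_val_ne (by simp; omega))]
        · simp only [Function.comp_apply, Equiv.swap_apply_left]
        · simp only [Function.comp_apply, Equiv.swap_apply_right]
        · simp only [Function.comp_apply]
          rw [Equiv.swap_apply_of_ne_of_ne (Fin.ne_of_val_ne (by simp))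
            (Fin.ne_of_val_ne (by simp))]

section
variable {M : Type*} [Monoid M] (ι : S → M)

theorem pi_adj (hcs : ∀ s t u : S, op (op s t) (op s u) = op (op t s) (op t u))
    (hrel : ∀ s u : S, ι s * ι (op s u) = ι u * ι (op u s)) :
    ∀ (n : ℕ) (t : Fin n → S) (a b : Fin n), (a : ℕ) + 1 = b →
      PiExpr op ι n (t ∘ Equiv.swap a b) = PiExpr op ι n t := by
  intro n
  induction n with
  | zero => intro t a b _; exact a.elim0
  | succ m IH =>
    intro t a b hab
    have hb : (b : ℕ) < m + 1 := b.isLt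
    rcases Nat.lt_or_ge (b : ℕ) m with hbm | hbm
    · -- swap among the first m entries
      set a' : Fin m := ⟨a, by omega⟩ with ha'
      set b' : Fin m := ⟨b, by omega⟩ with hb'
      have haa : a = a'.castSucc := by apply Fin.ext; simp [ha']
      have hbb : b = b'.castSucc := by apply Fin.ext; simp [hb']
      have hswap : ∀ i : Fin m,
          Equiv.swap a b i.castSucc = (Equiv.swap a' b' i).castSucc := by
        intro i
        rw [haa, hbb]
        exact (Fin.castSucc_injective _).swap_apply a' b' i
      rw [pi_succ, pi_succ]
      have e1 : (fun i : Fin m => (t ∘ Equiv.swap a b) i.castSucc)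
          = (fun i => t i.castSucc) ∘ Equiv.swap a' b' := by
        funext i
        simp only [Function.comp_apply]
        rw [hswap]
      rw [e1]
      have c1 : (a' : ℕ) + 1 = b' := by simp [ha', hb']; omega
      exact congrArg₂ (· * ·) (IH _ a' b' c1)
        (congrArg ι (omega_adj op hcs m t a b hab hbm))
    · -- swap of the last two entries
      have hbm' : (b : ℕ) = m := by omega
      rcases m with _ | l
      · omega
      · have ha : a = (Fin.last l).castSucc := by apply Fin.ext; simp; omega
        have hbq : b = Fin.last (l + 1) := by apply Fin.ext; simp; omega
        rw [ha, hbq]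
        set σ := Equiv.swap ((Fin.last l).castSucc) (Fin.last (l + 1)) with hσ
        have hsl : σ ((Fin.last l).castSucc) = Fin.last (l + 1) := Equiv.swap_apply_left _ _
        have hsr : σ (Fin.last (l + 1)) = (Fin.last l).castSucc := Equiv.swap_apply_right _ _
        have hfix : ∀ i : Fin (l + 1), i ≠ Fin.last l → σ i.castSucc = i.castSucc := by
          intro i hi
          refine Equiv.swap_apply_of_ne_of_ne (fun hc => hi (Fin.castSucc_injective _ hc))
            (Fin.castSucc_lt_last i).ne
        simp only [pi_succ]
        have eP : (fun i : Fin l => (t ∘ σ) i.castSucc.castSucc)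
            = fun i => t i.castSucc.castSucc := by
          funext i
          simp only [Function.comp_apply]
          rw [hfix i.castSucc (Fin.castSucc_lt_last i).ne]
        have es' : (fun i : Fin (l + 1) => (t ∘ σ) i.castSucc)
            = fun i => if i = Fin.last l then t (Fin.last (l + 1)) else t i.castSucc := by
          funext i
          simp only [Function.comp_apply]
          by_cases h : i = Fin.last l
          · rw [h, if_pos rfl, hsl]
          · rw [if_neg h, hfix i h]
        have eOm1 : Omega op (l + 1) (t ∘ σ)
            = op (Omega op l (fun i => if i = Fin.last l then t (Fin.last (l + 1))
                else t i.castSucc))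
              (Omega op l (fun i => t i.castSucc)) := by
          rw [omega_succ]
          congr 1
          · rw [es']
          · congr 1
            funext i
            simp only [Function.comp_apply]
            by_cases h : i = Fin.last l
            · rw [if_pos h, hsr, h]
            · rw [if_neg h, hfix i h]
        have eOm2 : Omega op (l + 1) t
            = op (Omega op l (fun i => t i.castSucc))
              (Omega op l (fun i => if i = Fin.last l then t (Fin.last (l + 1))
                else t i.castSucc)) := omega_succ op l t
        rw [eP, es', eOm1, eOm2, mul_assoc, mul_assoc]
        exact congrArg (_ * ·) (hrel _ _).symm

theorem pi_swap_dist (hcs : ∀ s t u : S, op (op s t) (op s u) = op (op t s) (op t u))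
    (hrel : ∀ s u : S, ι s * ι (op s u) = ι u * ι (op u s)) :
    ∀ (d n : ℕ) (t : Fin n → S) (a b : Fin n), (b : ℕ) = a + d + 1 →
      PiExpr op ι n (t ∘ Equiv.swap a b) = PiExpr op ι n t := by
  intro d
  induction d with
  | zero => intro n t a b hb; exact pi_adj op ι hcs hrel n t a b (by omega)
  | succ e IH =>
    intro n t a b hb
    have hbn : (b : ℕ) < n := b.isLt
    set c : Fin n := ⟨(a : ℕ) + 1, by omega⟩ with hc
    have hba : b ≠ a := Fin.ne_of_val_ne (by omega)
    have hbc : b ≠ c := Fin.ne_of_val_ne (by simp [hc]; omega)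
    have hdecomp : Equiv.swap c a * Equiv.swap b c * Equiv.swap c a = Equiv.swap a b :=
      Equiv.swap_mul_swap_mul_swap hbc hba
    have hfun : t ∘ Equiv.swap a b
        = ((t ∘ Equiv.swap c a) ∘ Equiv.swap b c) ∘ Equiv.swap c a := by
      rw [← hdecomp]
      rfl
    rw [hfun, Equiv.swap_comm c a,
      pi_adj op ι hcs hrel n _ a c (by simp [hc]),
      Equiv.swap_comm b c,
      IH n _ c b (by simp [hc]; omega),
      pi_adj op ι hcs hrel n t a c (by simp [hc])]

theorem pi_swap (hcs : ∀ s t u : S, op (op s t) (op s u) = op (op t s) (op t u))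
    (hrel : ∀ s u : S, ι s * ι (op s u) = ι u * ι (op u s))
    (n : ℕ) (t : Fin n → S) (a b : Fin n) :
    PiExpr op ι n (t ∘ Equiv.swap a b) = PiExpr op ι n t := by
  rcases Nat.lt_trichotomy (a : ℕ) (b : ℕ) with h | h | h
  · exact pi_swap_dist op ι hcs hrel ((b : ℕ) - a - 1) n t a b (by omega)
  · have : a = b := Fin.ext h
    rw [this, Equiv.swap_self]
    rfl
  · rw [Equiv.swap_comm]
    exact pi_swap_dist op ι hcs hrel ((a : ℕ) - b - 1) n t b a (by omega)

theorem pi_perm (hcs : ∀ s t u : S, op (op s t) (op s u) = op (op t s) (op t u))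
    (hrel : ∀ s u : S, ι s * ι (op s u) = ι u * ι (op u s))
    (n : ℕ) (t : Fin n → S) (σ : Equiv.Perm (Fin n)) :
    PiExpr op ι n (t ∘ σ) = PiExpr op ι n t := by
  refine Equiv.Perm.swap_induction_on
    (motive := fun σ => ∀ t : Fin n → S, PiExpr op ι n (t ∘ σ) = PiExpr op ι n t) σ ?_ ?_ t
  · intro t; rfl
  · intro f x y hxy IHf t
    have h : t ∘ ⇑(Equiv.swap x y * f) = (t ∘ Equiv.swap x y) ∘ f := rfl
    rw [h, IHf (t ∘ Equiv.swap x y), pi_swap op ι hcs hrel n t x y]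

end

end PiAux

theorem mkM_rel {S : Type*} (op : S → S → S) (s u : S) :
    mkM op s * mkM op (op s u) = mkM op u * mkM op (op u s) := by
  unfold mkM
  rw [← MonoidHom.map_mul, ← MonoidHom.map_mul]
  exact (Con.eq _).mpr (ConGen.Rel.of _ _ ⟨s, u, rfl, rfl⟩)


/-- In the structure monoid of a cycle set, `Π_k(t_1,…,t_k)` is invariant under any
permutation of the entries. -/
theorem PiExpr_perm_invariant {S : Type*} (op : S → S → S)
    (hbij : ∀ s : S, Function.Bijective (op s))
    (hcs : ∀ s t u : S, op (op s t) (op s u) = op (op t s) (op t u))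
    (k : ℕ) (t : Fin k → S) (σ : Equiv.Perm (Fin k)) :
    PiExpr op (mkM op) k (t ∘ σ) = PiExpr op (mkM op) k t :=
  PiAux.pi_perm op (mkM op) hcs (mkM_rel op) k t σ
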